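/- Let X be a compact metric space and f : X → X continuous. If f is distributionally chaotic in some strictly increasing sequence (q_i) of positive integers but f is not distributionally chaotic (DC1), then limsup_{i→∞} (q_{i+1} - q_i) = ∞. -/

import Mathlib

open Filter Set
open scoped Classical

/-- Lower density of times `i < n` with `dist (f^[i] x) (f^[i] y) < t`. -/
noncomputable def ldens {X : Type*} [MetricSpace X] (f : X → X) (x y : X) (t : ℝ) : ℝ :=
  Filter.liminf (fun n : ℕ =>
    (((Finset.range n).filter (fun i => dist (f^[i] x) (f^[i] y) < t)).card : ℝ) / n)
    Filter.atTop

/-- Upper density of times `i < n` with `dist (f^[i] x) (f^[i] y) < t`. -/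
noncomputable def udens {X : Type*} [MetricSpace X] (f : X → X) (x y : X) (t : ℝ) : ℝ :=
  Filter.limsup (fun n : ℕ =>
    (((Finset.range n).filter (fun i => dist (f^[i] x) (f^[i] y) < t)).card : ℝ) / n)
    Filter.atTop

/-- Lower density along the sequence of times `q i`. -/
noncomputable def ldensSeq {X : Type*} [MetricSpace X] (f : X → X) (q : ℕ → ℕ)
    (x y : X) (t : ℝ) : ℝ :=
  Filter.liminf (fun n : ℕ =>
    (((Finset.range n).filter (fun i => dist (f^[q i] x) (f^[q i] y) < t)).card : ℝ) / n)
    Filter.atTop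

/-- Upper density along the sequence of times `q i`. -/
noncomputable def udensSeq {X : Type*} [MetricSpace X] (f : X → X) (q : ℕ → ℕ)
    (x y : X) (t : ℝ) : ℝ :=
  Filter.limsup (fun n : ℕ =>
    (((Finset.range n).filter (fun i => dist (f^[q i] x) (f^[q i] y) < t)).card : ℝ) / n)
    Filter.atTop

/-- f is distributionally chaotic (DC1). -/
def DC1 {X : Type*} [MetricSpace X] (f : X → X) : Prop :=
  ∃ S : Set X, ¬ S.Countable ∧ ∀ x ∈ S, ∀ y ∈ S, x ≠ y →
    (∃ ε : ℝ, 0 < ε ∧ ldens f x y ε = 0) ∧ ∀ t : ℝ, 0 < t → udens f x y t = 1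

/-- f is distributionally chaotic in the sequence q. -/
def SDCin {X : Type*} [MetricSpace X] (f : X → X) (q : ℕ → ℕ) : Prop :=
  ∃ S : Set X, ¬ S.Countable ∧ ∀ x ∈ S, ∀ y ∈ S, x ≠ y →
    (∃ ε : ℝ, 0 < ε ∧ ldensSeq f q x y ε = 0) ∧ ∀ t : ℝ, 0 < t → udensSeq f q x y t = 1

/-! ### Auxiliary lemmas -/

/-- Uniform continuity of all iterates up to `M`. -/
lemma aux_iterUC {X : Type*} [MetricSpace X] [CompactSpace X] {f : X → X}
    (hf : Continuous f) (M : ℕ) {t : ℝ} (ht : 0 < t) :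
    ∃ δ : ℝ, 0 < δ ∧ ∀ a b : X, dist a b < δ → ∀ j ≤ M, dist (f^[j] a) (f^[j] b) < t := by
  induction M with
  | zero =>
    refine ⟨t, ht, fun a b h j hj => ?_⟩
    have hj0 : j = 0 := Nat.le_zero.mp hj
    subst hj0
    simpa using h
  | succ M ih =>
    obtain ⟨δ, hδ, H⟩ := ih
    have hc : Continuous (f^[M+1]) := hf.iterate _
    have huc := CompactSpace.uniformContinuous_of_continuous hc
    rw [Metric.uniformContinuous_iff] at huc
    obtain ⟨δ', hδ', H'⟩ := huc t ht
    refine ⟨min δ δ', lt_min hδ hδ', fun a b h j hj => ?_⟩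
    rcases eq_or_lt_of_le hj with rfl | h'
    · exact H' (lt_of_lt_of_le h (min_le_right _ _))
    · exact H a b (lt_of_lt_of_le h (min_le_left _ _)) j (Nat.lt_succ_iff.mp h')

lemma aux_exists_Ioc {q : ℕ → ℕ} :
    ∀ n m, q 0 < m → m ≤ q n → ∃ i, i < n ∧ q i < m ∧ m ≤ q (i+1) := by
  intro n
  induction n with
  | zero => intro m h1 h2; omega
  | succ n ih =>
    intro m h1 h2
    by_cases h : m ≤ q n
    · obtain ⟨i, hi, h3, h4⟩ := ih m h1 h
      exact ⟨i, Nat.lt_succ_of_lt hi, h3, h4⟩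
    · exact ⟨n, Nat.lt_succ_self n, Nat.lt_of_not_le h, h2⟩

lemma aux_exists_Ico {q : ℕ → ℕ} :
    ∀ n m, q 0 ≤ m → m < q n → ∃ i, i < n ∧ q i ≤ m ∧ m < q (i+1) := by
  intro n
  induction n with
  | zero => intro m h1 h2; omega
  | succ n ih =>
    intro m h1 h2
    by_cases h : m < q n
    · obtain ⟨i, hi, h3, h4⟩ := ih m h1 h
      exact ⟨i, Nat.lt_succ_of_lt hi, h3, h4⟩
    · exact ⟨n, Nat.lt_succ_self n, Nat.le_of_not_lt h, h2⟩

lemma aux_count_le {q : ℕ → ℕ} {M : ℕ} (hM : ∀ i, q (i+1) - q i ≤ M)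
    (P Q : ℕ → Prop) [DecidablePred P] [DecidablePred Q]
    (hkey : ∀ i m, q i < m → m ≤ q (i+1) → P m → Q (i+1)) (n : ℕ) :
    ((Finset.range (q n + 1)).filter P).card ≤
      (q 0 + 1) + M * ((Finset.range (n+1)).filter Q).card := by
  set s := (Finset.range n).filter (fun i => Q (i+1)) with hs
  have hsub : (Finset.range (q n + 1)).filter P ⊆
      Finset.range (q 0 + 1) ∪ s.biUnion (fun i => Finset.Ioc (q i) (q (i+1))) := by
    intro m hm
    simp only [Finset.mem_filter, Finset.mem_range] at hm
    rcases le_or_gt m (q 0) with h | h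
    · exact Finset.mem_union_left _ (Finset.mem_range.mpr (Nat.lt_succ_of_le h))
    · obtain ⟨i, hi, h1, h2⟩ := aux_exists_Ioc n m h (Nat.lt_succ_iff.mp hm.1)
      refine Finset.mem_union_right _ (Finset.mem_biUnion.mpr ⟨i, ?_, ?_⟩)
      · exact Finset.mem_filter.mpr ⟨Finset.mem_range.mpr hi, hkey i m h1 h2 hm.2⟩
      · exact Finset.mem_Ioc.mpr ⟨h1, h2⟩
  have h1 := Finset.card_le_card hsub
  have h2 := Finset.card_union_le (Finset.range (q 0 + 1))
      (s.biUnion (fun i => Finset.Ioc (q i) (q (i+1))))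
  have h3 := Finset.card_biUnion_le (s := s) (t := fun i => Finset.Ioc (q i) (q (i+1)))
  have h4 : ∑ i ∈ s, (Finset.Ioc (q i) (q (i+1))).card ≤ s.card * M := by
    calc ∑ i ∈ s, (Finset.Ioc (q i) (q (i+1))).card ≤ ∑ _i ∈ s, M := by
          apply Finset.sum_le_sum
          intro i _
          rw [Nat.card_Ioc]
          exact hM i
      _ = s.card * M := by rw [Finset.sum_const, smul_eq_mul]
  have h5 : s.card ≤ ((Finset.range (n+1)).filter Q).card := by
    apply Finset.card_le_card_of_injOn (fun i => i + 1)
    · intro i hi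
      simp only [hs, Finset.mem_coe, Finset.mem_filter, Finset.mem_range] at hi ⊢
      exact ⟨by omega, hi.2⟩
    · intro a _ b _ hab
      simpa using hab
  have h6 := Nat.mul_le_mul_left M h5
  have h7 : (Finset.range (q 0 + 1)).card = q 0 + 1 := Finset.card_range _
  have h8 : s.card * M = M * s.card := Nat.mul_comm _ _
  omega

lemma aux_count_le' {q : ℕ → ℕ} {M : ℕ} (hM : ∀ i, q (i+1) - q i ≤ M)
    (P Q : ℕ → Prop) [DecidablePred P] [DecidablePred Q]
    (hkey : ∀ i m, q i ≤ m → m < q (i+1) → P m → Q i) (n : ℕ) :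
    ((Finset.range (q n)).filter P).card ≤
      q 0 + M * ((Finset.range n).filter Q).card := by
  set s := (Finset.range n).filter Q with hs
  have hsub : (Finset.range (q n)).filter P ⊆
      Finset.range (q 0) ∪ s.biUnion (fun i => Finset.Ico (q i) (q (i+1))) := by
    intro m hm
    simp only [Finset.mem_filter, Finset.mem_range] at hm
    rcases lt_or_ge m (q 0) with h | h
    · exact Finset.mem_union_left _ (Finset.mem_range.mpr h)
    · obtain ⟨i, hi, h1, h2⟩ := aux_exists_Ico n m h hm.1
      refine Finset.mem_union_right _ (Finset.mem_biUnion.mpr ⟨i, ?_, ?_⟩)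
      · exact Finset.mem_filter.mpr ⟨Finset.mem_range.mpr hi, hkey i m h1 h2 hm.2⟩
      · exact Finset.mem_Ico.mpr ⟨h1, h2⟩
  have h1 := Finset.card_le_card hsub
  have h2 := Finset.card_union_le (Finset.range (q 0))
      (s.biUnion (fun i => Finset.Ico (q i) (q (i+1))))
  have h3 := Finset.card_biUnion_le (s := s) (t := fun i => Finset.Ico (q i) (q (i+1)))
  have h4 : ∑ i ∈ s, (Finset.Ico (q i) (q (i+1))).card ≤ s.card * M := by
    calc ∑ i ∈ s, (Finset.Ico (q i) (q (i+1))).card ≤ ∑ _i ∈ s, M := by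
          apply Finset.sum_le_sum
          intro i _
          rw [Nat.card_Ico]
          exact hM i
      _ = s.card * M := by rw [Finset.sum_const, smul_eq_mul]
  have h7 : (Finset.range (q 0)).card = q 0 := Finset.card_range _
  have h8 : s.card * M = M * s.card := Nat.mul_comm _ _
  omega

lemma aux_filter_succ (Q : ℕ → Prop) [DecidablePred Q] (n : ℕ) :
    ((Finset.range (n+1)).filter Q).card ≤ ((Finset.range n).filter Q).card + 1 := by
  rw [Finset.range_add_one, Finset.filter_insert]
  split
  · exact Finset.card_insert_le _ _
  · omega

lemma aux_frac_le_one {c n : ℕ} (h : c ≤ n) : (c : ℝ)/n ≤ 1 := by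
  rcases Nat.eq_zero_or_pos n with rfl | hn
  · have : c = 0 := by omega
    subst this
    simp
  · rw [div_le_one (by exact_mod_cast hn)]
    exact_mod_cast h

/-- Transfer zero lower density along the sequence to zero lower density. -/
lemma aux_Lld (c cq : ℕ → ℕ) (q : ℕ → ℕ) (A M : ℕ)
    (hcle : ∀ N, c N ≤ N) (hcqle : ∀ n, cq n ≤ n) (hqn : ∀ n, n ≤ q n)
    (hbound : ∀ n, c (q n + 1) ≤ A + M * (cq n + 1))
    (hliminf : Filter.liminf (fun n : ℕ => ((cq n : ℝ))/n) Filter.atTop = 0) :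
    Filter.liminf (fun N : ℕ => ((c N : ℝ))/N) Filter.atTop = 0 := by
  have hub : IsBoundedUnder (· ≤ ·) atTop (fun N : ℕ => ((c N : ℝ))/N) :=
    Filter.isBoundedUnder_of ⟨1, fun N => aux_frac_le_one (hcle N)⟩
  have hlb : IsBoundedUnder (· ≥ ·) atTop (fun N : ℕ => ((c N : ℝ))/N) :=
    Filter.isBoundedUnder_of ⟨0, fun N => by positivity⟩
  have hcqub : IsBoundedUnder (· ≤ ·) atTop (fun n : ℕ => ((cq n : ℝ))/n) :=
    Filter.isBoundedUnder_of ⟨1, fun n => aux_frac_le_one (hcqle n)⟩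
  refine le_antisymm ?_
    (le_liminf_of_le hub.isCoboundedUnder_ge (Filter.Eventually.of_forall fun N => by positivity))
  apply le_of_forall_pos_le_add
  intro δ hδ
  rw [zero_add]
  apply liminf_le_of_frequently_le _ hlb
  set δ1 : ℝ := δ / (2 * (M+1)) with hδ1
  have hδ1pos : 0 < δ1 := by positivity
  have hfreq : ∃ᶠ n in atTop, ((cq n : ℝ))/n < δ1 :=
    frequently_lt_of_liminf_lt hcqub.isCoboundedUnder_ge (by rw [hliminf]; exact hδ1pos)
  obtain ⟨n1, hn1⟩ := exists_nat_gt (2 * ((A : ℝ) + M) / δ)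
  rw [frequently_atTop]
  intro N0
  obtain ⟨n, hgn, hn⟩ := (hfreq.and_eventually (eventually_ge_atTop (max N0 (n1+1)))).exists
  have hnN0 : N0 ≤ n := le_trans (le_max_left _ _) hn
  have hnn1 : n1 + 1 ≤ n := le_trans (le_max_right _ _) hn
  refine ⟨q n + 1, by have := hqn n; omega, ?_⟩
  have hnpos : (0 : ℝ) < n := by
    have : 0 < n := by omega
    exact_mod_cast this
  have hM0 : (0 : ℝ) ≤ M := by positivity
  have hdenom : (n : ℝ) ≤ ((q n + 1 : ℕ) : ℝ) := by
    have := hqn n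
    exact_mod_cast by omega
  have hnum : ((c (q n + 1) : ℕ) : ℝ) ≤ (A : ℝ) + M * ((cq n : ℝ) + 1) := by
    have := hbound n
    have h' : ((c (q n + 1) : ℕ) : ℝ) ≤ ((A + M * (cq n + 1) : ℕ) : ℝ) := by exact_mod_cast this
    calc ((c (q n + 1) : ℕ) : ℝ) ≤ ((A + M * (cq n + 1) : ℕ) : ℝ) := h'
      _ = (A : ℝ) + M * ((cq n : ℝ) + 1) := by push_cast; ring
  have hstep1 : ((c (q n + 1) : ℕ) : ℝ) / ((q n + 1 : ℕ) : ℝ) ≤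
      ((A : ℝ) + M * ((cq n : ℝ) + 1)) / n := by
    apply div_le_div₀ (by positivity) hnum hnpos hdenom
  have hstep2 : ((A : ℝ) + M * ((cq n : ℝ) + 1)) / n = ((A : ℝ) + M)/n + M * ((cq n : ℝ)/n) := by
    field_simp
    ring
  have hstep3 : (M : ℝ) * ((cq n : ℝ)/n) ≤ M * δ1 :=
    mul_le_mul_of_nonneg_left hgn.le hM0
  have hstep4 : (M : ℝ) * δ1 ≤ δ / 2 := by
    rw [hδ1, mul_div_assoc']
    rw [div_le_div_iff₀ (by positivity) (by norm_num : (0:ℝ) < 2)]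
    nlinarith [hδ.le, hM0]
  have hstep5 : ((A : ℝ) + M)/n ≤ δ / 2 := by
    rw [div_le_iff₀ hnpos]
    have h2' : 2 * ((A : ℝ) + M) / δ < n := lt_of_lt_of_le hn1 (by exact_mod_cast by omega)
    rw [div_lt_iff₀ hδ] at h2'
    nlinarith
  calc ((c (q n + 1) : ℕ) : ℝ) / ((q n + 1 : ℕ) : ℝ)
      ≤ ((A : ℝ) + M)/n + M * ((cq n : ℝ)/n) := by rw [← hstep2]; exact hstep1
    _ ≤ δ/2 + δ/2 := add_le_add hstep5 (le_trans hstep3 hstep4)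
    _ = δ := by ring

/-- Transfer full upper density along the sequence to full upper density. -/
lemma aux_Lud (c cq : ℕ → ℕ) (q : ℕ → ℕ) (B M : ℕ)
    (hcle : ∀ N, c N ≤ N) (hcqle : ∀ n, cq n ≤ n) (hqn : ∀ n, n ≤ q n)
    (hbound : ∀ n, q n ≤ c (q n) + B + M * (n - cq n))
    (hlimsup : Filter.limsup (fun n : ℕ => ((cq n : ℝ))/n) Filter.atTop = 1) :
    Filter.limsup (fun N : ℕ => ((c N : ℝ))/N) Filter.atTop = 1 := by
  have hub : IsBoundedUnder (· ≤ ·) atTop (fun N : ℕ => ((c N : ℝ))/N) :=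
    Filter.isBoundedUnder_of ⟨1, fun N => aux_frac_le_one (hcle N)⟩
  have hlb : IsBoundedUnder (· ≥ ·) atTop (fun N : ℕ => ((c N : ℝ))/N) :=
    Filter.isBoundedUnder_of ⟨0, fun N => by positivity⟩
  have hcqlb : IsBoundedUnder (· ≥ ·) atTop (fun n : ℕ => ((cq n : ℝ))/n) :=
    Filter.isBoundedUnder_of ⟨0, fun n => by positivity⟩
  refine le_antisymm
    (limsup_le_of_le hlb.isCoboundedUnder_le
      (Filter.Eventually.of_forall fun N => aux_frac_le_one (hcle N))) ?_
  apply le_of_forall_pos_le_add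
  intro δ hδ
  have key : 1 - δ ≤ Filter.limsup (fun N : ℕ => ((c N : ℝ))/N) Filter.atTop := by
    apply le_limsup_of_frequently_le _ hub
    set δ1 : ℝ := δ / (2 * (M+1)) with hδ1
    have hδ1pos : 0 < δ1 := by positivity
    have hfreq : ∃ᶠ n in atTop, 1 - δ1 < ((cq n : ℝ))/n :=
      frequently_lt_of_lt_limsup hcqlb.isCoboundedUnder_le (by rw [hlimsup]; linarith)
    obtain ⟨n1, hn1⟩ := exists_nat_gt (2 * (B : ℝ) / δ)
    rw [frequently_atTop]
    intro N0
    obtain ⟨n, hgn, hn⟩ := (hfreq.and_eventually (eventually_ge_atTop (max N0 (n1+1)))).exists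
    have hnN0 : N0 ≤ n := le_trans (le_max_left _ _) hn
    have hnn1 : n1 + 1 ≤ n := le_trans (le_max_right _ _) hn
    refine ⟨q n, le_trans hnN0 (hqn n), ?_⟩
    have hnpos : (0 : ℝ) < n := by
      have : 0 < n := by omega
      exact_mod_cast this
    have hqnpos : (0 : ℝ) < ((q n : ℕ) : ℝ) := by
      have : 0 < q n := lt_of_lt_of_le (by omega) (hqn n)
      exact_mod_cast this
    have hM0 : (0 : ℝ) ≤ M := by positivity
    have hB0 : (0 : ℝ) ≤ B := by positivity
    have hnq : (n : ℝ) ≤ ((q n : ℕ) : ℝ) := by exact_mod_cast hqn n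
    have hsmall : (n : ℝ) - (cq n : ℝ) ≤ δ1 * n := by
      have := (lt_div_iff₀ hnpos).mp hgn
      nlinarith
    have hb' : ((q n : ℕ) : ℝ) ≤ (c (q n) : ℝ) + B + M * ((n : ℝ) - (cq n : ℝ)) := by
      have hb := hbound n
      calc ((q n : ℕ) : ℝ) ≤ ((c (q n) + B + M * (n - cq n) : ℕ) : ℝ) := by exact_mod_cast hb
        _ = (c (q n) : ℝ) + B + M * ((n : ℝ) - (cq n : ℝ)) := by
            push_cast [Nat.cast_sub (hcqle n)]
            ring
    have hclow : ((q n : ℕ) : ℝ) - ((B : ℝ) + M * (δ1 * n)) ≤ (c (q n) : ℝ) := by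
      nlinarith
    have hA0 : (0 : ℝ) ≤ (B : ℝ) + M * (δ1 * n) := by positivity
    have hfrac : 1 - ((B : ℝ) + M * (δ1 * n)) / n ≤ (c (q n) : ℝ) / ((q n : ℕ) : ℝ) := by
      have step1 : (((q n : ℕ) : ℝ) - ((B : ℝ) + M * (δ1 * n))) / ((q n : ℕ) : ℝ)
          ≤ (c (q n) : ℝ) / ((q n : ℕ) : ℝ) :=
        div_le_div₀ (by positivity) hclow hqnpos le_rfl
      have step2 : (((q n : ℕ) : ℝ) - ((B : ℝ) + M * (δ1 * n))) / ((q n : ℕ) : ℝ)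
          = 1 - ((B : ℝ) + M * (δ1 * n)) / ((q n : ℕ) : ℝ) := by
        field_simp
      have step3 : ((B : ℝ) + M * (δ1 * n)) / ((q n : ℕ) : ℝ) ≤ ((B : ℝ) + M * (δ1 * n)) / n :=
        div_le_div_of_nonneg_left hA0 hnpos hnq
      calc 1 - ((B : ℝ) + M * (δ1 * n)) / n
          ≤ 1 - ((B : ℝ) + M * (δ1 * n)) / ((q n : ℕ) : ℝ) := by linarith
        _ = _ := step2.symm
        _ ≤ _ := step1
    have hBn : (B : ℝ) / n ≤ δ / 2 := by
      rw [div_le_iff₀ hnpos]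
      have h2' : 2 * (B : ℝ) / δ < n := lt_of_lt_of_le hn1 (by exact_mod_cast by omega)
      rw [div_lt_iff₀ hδ] at h2'
      nlinarith
    have hMδ1 : (M : ℝ) * δ1 ≤ δ / 2 := by
      rw [hδ1, mul_div_assoc']
      rw [div_le_div_iff₀ (by positivity) (by norm_num : (0:ℝ) < 2)]
      nlinarith [hδ.le, hM0]
    have hsplit : ((B : ℝ) + M * (δ1 * n)) / n = (B : ℝ)/n + M * δ1 := by
      field_simp
    calc (1 : ℝ) - δ = 1 - (δ/2 + δ/2) := by ring
      _ ≤ 1 - ((B : ℝ)/n + M * δ1) := by linarith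
      _ = 1 - ((B : ℝ) + M * (δ1 * n)) / n := by rw [hsplit]
      _ ≤ (c (q n) : ℝ) / ((q n : ℕ) : ℝ) := hfrac
  linarith

theorem stmt_18 {X : Type*} [MetricSpace X] [CompactSpace X]
    (f : X → X) (hf : Continuous f)
    (q : ℕ → ℕ) (hq : StrictMono q) (hqpos : ∀ i, 0 < q i)
    (h1 : SDCin f q) (h2 : ¬ DC1 f) :
    Filter.limsup (fun i : ℕ => ((q (i + 1) - q i : ℕ) : ℕ∞)) Filter.atTop = ⊤ := by
  by_contra h
  -- Step 1: extract a uniform bound on the gaps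
  obtain ⟨K, hK⟩ := WithTop.ne_top_iff_exists.mp h
  have hlt : Filter.limsup (fun i : ℕ => ((q (i + 1) - q i : ℕ) : ℕ∞)) Filter.atTop
      < (K : ℕ∞) + 1 := by
    rw [← hK]
    exact ENat.lt_add_one_iff (by simp) |>.mpr le_rfl
  have hev := eventually_lt_of_limsup_lt hlt (Filter.isBoundedUnder_of ⟨⊤, fun _ => le_top⟩)
  obtain ⟨i0, hi0⟩ := eventually_atTop.mp hev
  set M : ℕ := max (K + 1) (q i0) with hMdef
  have hM : ∀ i, q (i+1) - q i ≤ M := by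
    intro i
    rcases le_or_gt i0 i with h' | h'
    · have hlt' := hi0 i h'
      have : q (i+1) - q i ≤ K := by
        have h'' : ((q (i + 1) - q i : ℕ) : ℕ∞) ≤ (K : ℕ∞) :=
          ENat.lt_add_one_iff (by simp) |>.mp hlt'
        exact_mod_cast h''
      omega
    · have h1' : q (i+1) ≤ q i0 := hq.monotone (by omega)
      have := le_max_right (K+1) (q i0)
      omega
  have hqn : ∀ n, n ≤ q n := fun n => hq.le_apply
  -- Step 2: build DC1 from SDCin, contradiction
  obtain ⟨S, hSc, hS⟩ := h1
  apply h2
  refine ⟨S, hSc, fun x hx y hy hxy => ?_⟩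
  obtain ⟨⟨ε0, hε0, hld⟩, hud⟩ := hS x hx y hy hxy
  constructor
  · -- lower density part
    obtain ⟨ε', hε'pos, hkeyA⟩ := aux_iterUC hf M hε0
    refine ⟨ε', hε'pos, ?_⟩
    show Filter.liminf (fun N : ℕ =>
      ((((Finset.range N).filter (fun m => dist (f^[m] x) (f^[m] y) < ε')).card : ℕ) : ℝ) / N)
      Filter.atTop = 0
    apply aux_Lld
      (fun N => ((Finset.range N).filter (fun m => dist (f^[m] x) (f^[m] y) < ε')).card)
      (fun n => ((Finset.range n).filter (fun i => dist (f^[q i] x) (f^[q i] y) < ε0)).card)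
      q (q 0 + 1) M
    · intro N
      calc ((Finset.range N).filter (fun m => dist (f^[m] x) (f^[m] y) < ε')).card
          ≤ (Finset.range N).card := Finset.card_filter_le _ _
        _ = N := Finset.card_range _
    · intro n
      calc ((Finset.range n).filter (fun i => dist (f^[q i] x) (f^[q i] y) < ε0)).card
          ≤ (Finset.range n).card := Finset.card_filter_le _ _
        _ = n := Finset.card_range _
    · exact hqn
    · intro n
      have hkey : ∀ i m, q i < m → m ≤ q (i+1) →
          dist (f^[m] x) (f^[m] y) < ε' → dist (f^[q (i+1)] x) (f^[q (i+1)] y) < ε0 := by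
        intro i m hm1 hm2 hP
        have hj : q (i+1) - m ≤ M := by
          have := hM i
          omega
        have hlem := hkeyA _ _ hP (q (i+1) - m) hj
        rwa [← Function.iterate_add_apply, ← Function.iterate_add_apply,
          Nat.sub_add_cancel hm2] at hlem
      have hc := aux_count_le hM (fun m => dist (f^[m] x) (f^[m] y) < ε')
        (fun i => dist (f^[q i] x) (f^[q i] y) < ε0) hkey n
      have hsucc := aux_filter_succ (fun i => dist (f^[q i] x) (f^[q i] y) < ε0) n
      have := Nat.mul_le_mul_left M hsucc
      omega
    · exact hld
  · -- upper density part
    intro t ht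
    obtain ⟨δ0, hδ0, hkeyB⟩ := aux_iterUC hf M ht
    have hudq := hud δ0 hδ0
    show Filter.limsup (fun N : ℕ =>
      ((((Finset.range N).filter (fun m => dist (f^[m] x) (f^[m] y) < t)).card : ℕ) : ℝ) / N)
      Filter.atTop = 1
    apply aux_Lud
      (fun N => ((Finset.range N).filter (fun m => dist (f^[m] x) (f^[m] y) < t)).card)
      (fun n => ((Finset.range n).filter (fun i => dist (f^[q i] x) (f^[q i] y) < δ0)).card)
      q (q 0) M
    · intro N
      calc ((Finset.range N).filter (fun m => dist (f^[m] x) (f^[m] y) < t)).card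
          ≤ (Finset.range N).card := Finset.card_filter_le _ _
        _ = N := Finset.card_range _
    · intro n
      calc ((Finset.range n).filter (fun i => dist (f^[q i] x) (f^[q i] y) < δ0)).card
          ≤ (Finset.range n).card := Finset.card_filter_le _ _
        _ = n := Finset.card_range _
    · exact hqn
    · intro n
      have hkey : ∀ i m, q i ≤ m → m < q (i+1) →
          (¬ dist (f^[m] x) (f^[m] y) < t) → ¬ dist (f^[q i] x) (f^[q i] y) < δ0 := by
        intro i m hm1 hm2 hP hql
        apply hP
        have hj : m - q i ≤ M := by
          have := hM i
          omega
        have hlem := hkeyB _ _ hql (m - q i) hj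
        rwa [← Function.iterate_add_apply, ← Function.iterate_add_apply,
          Nat.sub_add_cancel hm1] at hlem
      have hc := aux_count_le' hM (fun m => ¬ dist (f^[m] x) (f^[m] y) < t)
        (fun i => ¬ dist (f^[q i] x) (f^[q i] y) < δ0) hkey n
      have hsplit1 := Finset.card_filter_add_card_filter_not
        (s := Finset.range (q n)) (fun m => dist (f^[m] x) (f^[m] y) < t)
      have hsplit2 := Finset.card_filter_add_card_filter_not
        (s := Finset.range n) (fun i => dist (f^[q i] x) (f^[q i] y) < δ0)
      rw [Finset.card_range] at hsplit1 hsplit2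
      have heq : ((Finset.range n).filter (fun i => ¬ dist (f^[q i] x) (f^[q i] y) < δ0)).card
          = n - ((Finset.range n).filter (fun i => dist (f^[q i] x) (f^[q i] y) < δ0)).card := by
        omega
      rw [heq] at hc
      omega
    · exact hudq
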